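/- Let A be an n×n real stochastic matrix (all entries nonnegative, every row sums to 1), let t ≥ 1, and let P be a map from the index set {1,…,n} to ℤ/tℤ such that A_{ij} > 0 implies P(j) = P(i) + 1. For i, j define dist(i,j) = min(a, t − a), where a ∈ {0,…,t−1} is the representative of P(j) − P(i) in ℤ/tℤ, and for an integer δ ≥ 0 let X^{(δ)} be the n×n 0–1 matrix with X^{(δ)}_{ij} = 1 if dist(i,j) = δ and 0 otherwise. Then for every δ ≥ 0, A X^{(δ)} Aᵀ = X^{(δ)}. -/
import Mathlib


open Matrix BigOperators

/-- The circular distance between the periodic classes of `i` and `j`: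
`min (a, t - a)` where `a ∈ {0, …, t-1}` represents `P j - P i` in `ℤ/tℤ`. -/
def cdist {n t : ℕ} (P : Fin n → ZMod t) (i j : Fin n) : ℕ :=
  min (P j - P i).val (t - (P j - P i).val)

/-- The 0-1 indicator matrix `X⁽δ⁾` of the relation `dist(i,j) = δ`. -/
def indMat {n t : ℕ} (P : Fin n → ZMod t) (δ : ℕ) : Matrix (Fin n) (Fin n) ℝ :=
  Matrix.of fun i j => if cdist P i j = δ then 1 else 0

/-- For a stochastic matrix `A` with periodic partition `P`, each indicator
matrix `X⁽δ⁾` of a distance class is fixed by the level 2 action: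
`A X⁽δ⁾ Aᵀ = X⁽δ⁾`. -/
theorem level2_fixes_indicators {n t : ℕ} (ht : 1 ≤ t)
    (A : Matrix (Fin n) (Fin n) ℝ)
    (hAnn : ∀ i j, 0 ≤ A i j) (hrow : ∀ i, ∑ j, A i j = 1)
    (P : Fin n → ZMod t) (hP : ∀ i j, 0 < A i j → P j = P i + 1)
    (δ : ℕ) :
    A * indMat P δ * Aᵀ = indMat P δ := by
  ext i j
  simp only [Matrix.mul_apply, Matrix.transpose_apply]
  have key : ∀ k l : Fin n,
      A i k * indMat P δ k l * A j l = A i k * indMat P δ i j * A j l := by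
    intro k l
    rcases eq_or_lt_of_le (hAnn i k) with h1 | h1
    · rw [← h1]; ring
    rcases eq_or_lt_of_le (hAnn j l) with h2 | h2
    · rw [← h2]; ring
    have hk := hP i k h1
    have hl := hP j l h2
    have hd : cdist P k l = cdist P i j := by
      unfold cdist
      rw [hk, hl]
      ring_nf
    simp [indMat, hd]
  calc ∑ l, (∑ k, A i k * indMat P δ k l) * A j l
      = ∑ l, ∑ k, A i k * indMat P δ k l * A j l := by
        simp [Finset.sum_mul]
    _ = ∑ l, ∑ k, A i k * indMat P δ i j * A j l := by
        simp only [key]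
    _ = indMat P δ i j := by
        simp only [← Finset.sum_mul, hrow, one_mul]
        rw [← Finset.mul_sum, hrow, mul_one]
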